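/- In the gap instance graph G_r, assigning x_a = 1/2 to every arc of G_r (and 0 to all other arcs of the metric completion) yields a feasible solution of the ATSPP subtour elimination LP of total cost r + 1. -/

import Mathlib

open Finset

variable {V : Type*} [Fintype V] [DecidableEq V]

/-- Total `x`-weight of arcs from `A` to `B`. -/
def flowBtw (x : V → V → ℝ) (A B : Finset V) : ℝ := ∑ u ∈ A, ∑ v ∈ B, x u v

/-- `x(∂⁺(U))`: weight of arcs leaving `U`. -/
def cutOut (x : V → V → ℝ) (U : Finset V) : ℝ := flowBtw x U Uᶜ

/-- `x(∂⁻(U))`: weight of arcs entering `U`. -/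
def cutIn (x : V → V → ℝ) (U : Finset V) : ℝ := flowBtw x Uᶜ U

/-- Feasibility for the ATSPP subtour elimination LP on the complete digraph on `V`. -/
structure FeasLP (s t : V) (x : V → V → ℝ) : Prop where
  nonneg : ∀ u v, 0 ≤ x u v
  diag : ∀ v, x v v = 0
  outS : ∑ v, x s v = 1
  inS : ∑ v, x v s = 0
  inT : ∑ v, x v t = 1
  outT : ∑ v, x t v = 0
  outDeg : ∀ v, v ≠ s → v ≠ t → ∑ w, x v w = 1
  inDeg : ∀ v, v ≠ s → v ≠ t → ∑ w, x w v = 1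
  cut : ∀ U : Finset V, s ∈ U → U ≠ Finset.univ → 1 ≤ cutOut x U

/-- Vertices of the gap instance `G_r`: `s`, `t`, `u₀,…,u_{r-1}`, `v₀,…,v_{r-1}`
(`u i` stands for `u_{i+1}` in 1-based paper notation). -/
inductive GapV (r : ℕ) where
  | s | t | u (i : Fin r) | v (i : Fin r)
  deriving DecidableEq, Fintype

/-- The arcs of `G_r`. -/
def isArc {r : ℕ} : GapV r → GapV r → Bool
  | .s, .u i => i.val = 0
  | .s, .v i => i.val = 0
  | .u i, .t => i.val = r - 1
  | .v i, .t => i.val = r - 1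
  | .u i, .v j => i.val = 0 && j.val = r - 1
  | .v i, .u j => i.val = 0 && j.val = r - 1
  | .u i, .u j => j.val + 1 = i.val || i.val + 1 = j.val
  | .v i, .v j => j.val + 1 = i.val || i.val + 1 = j.val
  | _, _ => false

/-- Arc costs in `G_r`: the arcs `s u₁`, `s v₁`, `u_r t`, `v_r t`, `u_{i+1} u_i`,
`v_{i+1} v_i` cost 1; all other arcs cost 0. -/
noncomputable def gapCost {r : ℕ} : GapV r → GapV r → ℝ
  | .s, .u _ => 1
  | .s, .v _ => 1
  | .u _, .t => 1
  | .v _, .t => 1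
  | .u i, .u j => if j.val + 1 = i.val then 1 else 0
  | .v i, .v j => if j.val + 1 = i.val then 1 else 0
  | _, _ => 0

/-- The half-integral LP solution: `1/2` on every arc of `G_r`, `0` elsewhere. -/
noncomputable def gapX (r : ℕ) : GapV r → GapV r → ℝ := fun a b => if isArc a b then 1/2 else 0

section helpers
variable {r : ℕ}

lemma sum_gapV {M : Type*} [AddCommMonoid M] (f : GapV r → M) :
    ∑ x, f x = f .s + f .t + (∑ i, f (.u i)) + ∑ i, f (.v i) := by
  classical
  let e : (Unit ⊕ Unit) ⊕ (Fin r ⊕ Fin r) ≃ GapV r :=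
    { toFun := fun x => match x with
        | .inl (.inl _) => .s | .inl (.inr _) => .t
        | .inr (.inl i) => .u i | .inr (.inr i) => .v i
      invFun := fun x => match x with
        | .s => .inl (.inl ()) | .t => .inl (.inr ())
        | .u i => .inr (.inl i) | .v i => .inr (.inr i)
      left_inv := by rintro ((_|_)|(_|_)) <;> rfl
      right_inv := by rintro (_|_|_|_) <;> rfl }
  rw [← e.sum_comp f]
  simp [Fintype.sum_sum_type, e, add_assoc]

lemma sum_fin_ite (r m : ℕ) (c : ℝ) :
    ∑ j : Fin r, (if j.val = m then c else 0) = if m < r then c else 0 := by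
  rcases lt_or_ge m r with h | h
  · rw [if_pos h, Finset.sum_eq_single (⟨m, h⟩ : Fin r)]
    · simp
    · intro b _ hb
      rw [if_neg]; intro hv; exact hb (Fin.ext hv)
    · simp
  · rw [if_neg (by omega)]
    apply Finset.sum_eq_zero
    intro j _
    rw [if_neg]; have := j.isLt; omega

lemma sum_fin_pred (i : Fin r) (c : ℝ) :
    ∑ j : Fin r, (if j.val + 1 = i.val then c else 0) = if 1 ≤ i.val then c else 0 := by
  have : ∀ j : Fin r, (if j.val + 1 = i.val then c else 0)
      = if j.val = i.val - 1 then (if 1 ≤ i.val then c else 0) else 0 := by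
    intro j
    by_cases h : j.val + 1 = i.val
    · rw [if_pos h, if_pos (by omega), if_pos (by omega)]
    · by_cases h2 : j.val = i.val - 1
      · rw [if_neg h, if_pos h2, if_neg (by omega)]
      · rw [if_neg h, if_neg h2]
  rw [Finset.sum_congr rfl (fun j _ => this j), sum_fin_ite, if_pos (by have := i.isLt; omega)]

lemma sum_fin_succ (i : Fin r) (c : ℝ) :
    ∑ j : Fin r, (if i.val + 1 = j.val then c else 0) = if i.val + 1 < r then c else 0 := by
  have : ∀ j : Fin r, (if i.val + 1 = j.val then c else 0)
      = if j.val = i.val + 1 then c else 0 := by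
    intro j; by_cases h : i.val + 1 = j.val
    · rw [if_pos h, if_pos h.symm]
    · rw [if_neg h, if_neg (fun hh => h hh.symm)]
  rw [Finset.sum_congr rfl (fun j _ => this j), sum_fin_ite]

lemma sum_fin_ge1 (hr : 1 ≤ r) (c : ℝ) :
    ∑ j : Fin r, (if 1 ≤ j.val then c else 0) = (r - 1 : ℝ) * c := by
  have : ∀ j : Fin r, (if 1 ≤ j.val then c else 0) = c - (if j.val = 0 then c else 0) := by
    intro j; by_cases h : 1 ≤ j.val
    · rw [if_pos h, if_neg (by omega)]; ring
    · rw [if_neg h, if_pos (by omega)]; ring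
  rw [Finset.sum_congr rfl (fun j _ => this j), Finset.sum_sub_distrib, sum_fin_ite,
    if_pos (by omega), Finset.sum_const, Finset.card_univ, Fintype.card_fin]
  push_cast [nsmul_eq_mul]
  ring

lemma gapX_nonneg (a b : GapV r) : 0 ≤ gapX r a b := by
  simp only [gapX]; split <;> norm_num

lemma gapX_arc {a b : GapV r} (h : isArc a b = true) : gapX r a b = 1/2 := by
  simp only [gapX, h, if_true]

/-- out-degree of `s`. -/
lemma outS_eq (hr : 1 ≤ r) : ∑ b, gapX r .s b = 1 := by
  rw [sum_gapV]
  have h1 : ∀ j : Fin r, gapX r .s (.u j) = if j.val = 0 then 1/2 else 0 := by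
    intro j; simp [gapX, isArc]
  have h2 : ∀ j : Fin r, gapX r .s (.v j) = if j.val = 0 then 1/2 else 0 := by
    intro j; simp [gapX, isArc]
  rw [Finset.sum_congr rfl (fun j _ => h1 j), Finset.sum_congr rfl (fun j _ => h2 j),
    sum_fin_ite, if_pos (show 0 < r by omega)]
  simp [gapX, isArc]
  norm_num

lemma inS_eq : ∑ b, gapX r b .s = 0 := by
  rw [sum_gapV]
  simp [gapX, isArc]

lemma outT_eq : ∑ b, gapX r .t b = 0 := by
  rw [sum_gapV]
  simp [gapX, isArc]

lemma inT_eq (hr : 1 ≤ r) : ∑ b, gapX r b .t = 1 := by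
  rw [sum_gapV]
  have h1 : ∀ j : Fin r, gapX r (.u j) .t = if j.val = r - 1 then 1/2 else 0 := by
    intro j; simp [gapX, isArc]
  have h2 : ∀ j : Fin r, gapX r (.v j) .t = if j.val = r - 1 then 1/2 else 0 := by
    intro j; simp [gapX, isArc]
  rw [Finset.sum_congr rfl (fun j _ => h1 j), Finset.sum_congr rfl (fun j _ => h2 j),
    sum_fin_ite, if_pos (show r - 1 < r by omega)]
  simp [gapX, isArc]
  norm_num

lemma outU_eq (hr : 1 ≤ r) (i : Fin r) : ∑ b, gapX r (.u i) b = 1 := by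
  rw [sum_gapV]
  have h1 : ∀ j : Fin r, gapX r (.u i) (.u j)
      = (if j.val + 1 = i.val then (1/2:ℝ) else 0) + (if i.val + 1 = j.val then (1/2:ℝ) else 0) := by
    intro j; by_cases ha : j.val + 1 = i.val <;> by_cases hb : i.val + 1 = j.val <;> simp [gapX, isArc, ha, hb] <;> omega
  have h2 : ∀ j : Fin r, gapX r (.u i) (.v j)
      = if j.val = r - 1 then (if i.val = 0 then (1/2:ℝ) else 0) else 0 := by
    intro j; by_cases ha : i.val = 0 <;> by_cases hb : j.val = r - 1 <;> simp [gapX, isArc, ha, hb] <;> omega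
  rw [Finset.sum_congr rfl (fun j _ => h1 j), Finset.sum_congr rfl (fun j _ => h2 j),
    Finset.sum_add_distrib, sum_fin_pred, sum_fin_succ, sum_fin_ite,
    if_pos (show r - 1 < r by omega)]
  have hs : gapX r (.u i) .s = 0 := by simp [gapX, isArc]
  have ht : gapX r (.u i) .t = if i.val = r - 1 then (1/2:ℝ) else 0 := by simp [gapX, isArc]
  rw [hs, ht]
  have := i.isLt
  split_ifs <;> first | omega | norm_num

lemma outV_eq (hr : 1 ≤ r) (i : Fin r) : ∑ b, gapX r (.v i) b = 1 := by
  rw [sum_gapV]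
  have h1 : ∀ j : Fin r, gapX r (.v i) (.v j)
      = (if j.val + 1 = i.val then (1/2:ℝ) else 0) + (if i.val + 1 = j.val then (1/2:ℝ) else 0) := by
    intro j; by_cases ha : j.val + 1 = i.val <;> by_cases hb : i.val + 1 = j.val <;> simp [gapX, isArc, ha, hb] <;> omega
  have h2 : ∀ j : Fin r, gapX r (.v i) (.u j)
      = if j.val = r - 1 then (if i.val = 0 then (1/2:ℝ) else 0) else 0 := by
    intro j; by_cases ha : i.val = 0 <;> by_cases hb : j.val = r - 1 <;> simp [gapX, isArc, ha, hb] <;> omega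
  rw [Finset.sum_congr rfl (fun j _ => h1 j), Finset.sum_congr rfl (fun j _ => h2 j),
    Finset.sum_add_distrib, sum_fin_pred, sum_fin_succ, sum_fin_ite,
    if_pos (show r - 1 < r by omega)]
  have hs : gapX r (.v i) .s = 0 := by simp [gapX, isArc]
  have ht : gapX r (.v i) .t = if i.val = r - 1 then (1/2:ℝ) else 0 := by simp [gapX, isArc]
  rw [hs, ht]
  have := i.isLt
  split_ifs <;> first | omega | norm_num

lemma inU_eq (hr : 1 ≤ r) (i : Fin r) : ∑ b, gapX r b (.u i) = 1 := by
  rw [sum_gapV]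
  have h1 : ∀ j : Fin r, gapX r (.u j) (.u i)
      = (if j.val + 1 = i.val then (1/2:ℝ) else 0) + (if i.val + 1 = j.val then (1/2:ℝ) else 0) := by
    intro j; by_cases ha : j.val + 1 = i.val <;> by_cases hb : i.val + 1 = j.val <;> simp [gapX, isArc, ha, hb] <;> omega
  have h2 : ∀ j : Fin r, gapX r (.v j) (.u i)
      = if j.val = 0 then (if i.val = r - 1 then (1/2:ℝ) else 0) else 0 := by
    intro j; by_cases ha : j.val = 0 <;> by_cases hb : i.val = r - 1 <;> simp [gapX, isArc, ha, hb] <;> omega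
  rw [Finset.sum_congr rfl (fun j _ => h1 j), Finset.sum_congr rfl (fun j _ => h2 j),
    Finset.sum_add_distrib, sum_fin_pred, sum_fin_succ, sum_fin_ite,
    if_pos (show 0 < r by omega)]
  have hs : gapX r .s (.u i) = if i.val = 0 then (1/2:ℝ) else 0 := by simp [gapX, isArc]
  have ht : gapX r .t (.u i) = 0 := by simp [gapX, isArc]
  rw [hs, ht]
  have := i.isLt
  split_ifs <;> first | omega | norm_num

lemma inV_eq (hr : 1 ≤ r) (i : Fin r) : ∑ b, gapX r b (.v i) = 1 := by
  rw [sum_gapV]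
  have h1 : ∀ j : Fin r, gapX r (.v j) (.v i)
      = (if j.val + 1 = i.val then (1/2:ℝ) else 0) + (if i.val + 1 = j.val then (1/2:ℝ) else 0) := by
    intro j; by_cases ha : j.val + 1 = i.val <;> by_cases hb : i.val + 1 = j.val <;> simp [gapX, isArc, ha, hb] <;> omega
  have h2 : ∀ j : Fin r, gapX r (.u j) (.v i)
      = if j.val = 0 then (if i.val = r - 1 then (1/2:ℝ) else 0) else 0 := by
    intro j; by_cases ha : j.val = 0 <;> by_cases hb : i.val = r - 1 <;> simp [gapX, isArc, ha, hb] <;> omega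
  rw [Finset.sum_congr rfl (fun j _ => h1 j), Finset.sum_congr rfl (fun j _ => h2 j),
    Finset.sum_add_distrib, sum_fin_pred, sum_fin_succ, sum_fin_ite,
    if_pos (show 0 < r by omega)]
  have hs : gapX r .s (.v i) = if i.val = 0 then (1/2:ℝ) else 0 := by simp [gapX, isArc]
  have ht : gapX r .t (.v i) = 0 := by simp [gapX, isArc]
  rw [hs, ht]
  have := i.isLt
  split_ifs <;> first | omega | norm_num

lemma outDeg_eq (hr : 1 ≤ r) (b : GapV r) (hbs : b ≠ .s) (hbt : b ≠ .t) :
    ∑ w, gapX r b w = 1 := by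
  cases b with
  | s => exact absurd rfl hbs
  | t => exact absurd rfl hbt
  | u i => exact outU_eq hr i
  | v i => exact outV_eq hr i

lemma inDeg_eq (hr : 1 ≤ r) (b : GapV r) (hbs : b ≠ .s) (hbt : b ≠ .t) :
    ∑ w, gapX r w b = 1 := by
  cases b with
  | s => exact absurd rfl hbs
  | t => exact absurd rfl hbt
  | u i => exact inU_eq hr i
  | v i => exact inV_eq hr i

end helpers
section cut
variable {r : ℕ}

lemma reach {α : Type*} [DecidableEq α] [Fintype α] (U : Finset α) (f : ℕ → α) :
    ∀ k, (∀ i, i < k → (f i ∈ U → f (i+1) ∈ U)) → f 0 ∈ U → f k ∈ U := by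
  intro k
  induction k with
  | zero => intro _ h0; exact h0
  | succ n ih => intro h h0; exact h n (Nat.lt_succ_self n) (ih (fun i hi => h i (by omega)) h0)

lemma escape {α : Type*} [DecidableEq α] [Fintype α] (U : Finset α) (f : ℕ → α) (k : ℕ)
    (h0 : f 0 ∈ U) (hk : f k ∉ U) : ∃ i, i < k ∧ f i ∈ U ∧ f (i+1) ∉ U := by
  by_contra h
  push_neg at h
  exact hk (reach U f k (fun i hi hf => by
    by_contra hc
    exact hc ((h i hi hf))) h0)

lemma escape' {α : Type*} [DecidableEq α] [Fintype α] (U : Finset α) (f : ℕ → α) (k : ℕ)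
    (h0 : f 0 ∈ U) (hk : f k ∉ U) : ∃ i, i < k ∧ f i ∈ U ∧ f (i+1) ∉ U := by
  by_contra h
  push_neg at h
  exact hk (reach U f k h h0)

/-- the path `s, u₀, u₁, …, u_{r-1}, t`. -/
def pA (r : ℕ) : ℕ → GapV r := fun i =>
  if i = 0 then .s else if h : i - 1 < r then .u ⟨i-1, h⟩ else .t

/-- the path `s, v₀, v₁, …, v_{r-1}, t`. -/
def pB (r : ℕ) : ℕ → GapV r := fun i =>
  if i = 0 then .s else if h : i - 1 < r then .v ⟨i-1, h⟩ else .t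

/-- the cycle walk `v_{r-1}, …, v₀, u_{r-1}, …, u₀`. -/
def pC (r : ℕ) : ℕ → GapV r := fun i =>
  if h : i < r then .v ⟨r-1-i, by omega⟩
  else if h2 : i - r < r then .u ⟨r-1-(i-r), by omega⟩ else .t

/-- the cycle walk `u_{r-1}, …, u₀, v_{r-1}, …, v₀`. -/
def pD (r : ℕ) : ℕ → GapV r := fun i =>
  if h : i < r then .u ⟨r-1-i, by omega⟩
  else if h2 : i - r < r then .v ⟨r-1-(i-r), by omega⟩ else .t

lemma pA_zero : pA r 0 = .s := by simp [pA]
lemma pA_succ {i : ℕ} (h : i < r) : pA r (i+1) = .u ⟨i, h⟩ := by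
  unfold pA
  rw [if_neg (Nat.succ_ne_zero i)]
  simp only [Nat.add_sub_cancel]
  rw [dif_pos h]
lemma pB_zero : pB r 0 = .s := by simp [pB]
lemma pB_succ {i : ℕ} (h : i < r) : pB r (i+1) = .v ⟨i, h⟩ := by
  unfold pB
  rw [if_neg (Nat.succ_ne_zero i)]
  simp only [Nat.add_sub_cancel]
  rw [dif_pos h]
lemma pC_v {i : ℕ} (h : i < r) : pC r i = .v ⟨r-1-i, by omega⟩ := by simp [pC, h]
lemma pC_u {i : ℕ} (h1 : r ≤ i) (h2 : i < 2*r) :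
    pC r i = .u ⟨r-1-(i-r), by omega⟩ := by
  have : ¬ i < r := by omega
  simp [pC, this, show i - r < r by omega]
lemma pD_u {i : ℕ} (h : i < r) : pD r i = .u ⟨r-1-i, by omega⟩ := by simp [pD, h]
lemma pD_v {i : ℕ} (h1 : r ≤ i) (h2 : i < 2*r) :
    pD r i = .v ⟨r-1-(i-r), by omega⟩ := by
  have : ¬ i < r := by omega
  simp [pD, this, show i - r < r by omega]

/-- crossing arc produced by the chain `pA`. -/
lemma chainA_cross (U : Finset (GapV r)) (hs : GapV.s ∈ U) (k : Fin r) (hk : GapV.u k ∉ U) :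
    ∃ (a : GapV r) (j : Fin r), isArc a (.u j) = true ∧ a ∈ U ∧ (GapV.u j : GapV r) ∉ U ∧
      (a = .s ∨ ∃ m : Fin r, a = .u m ∧ m.val + 1 = j.val) := by
  have hk' : pA r (k.val + 1) ∉ U := by rw [pA_succ k.isLt]; simpa using hk
  obtain ⟨i, hi, hin, hout⟩ := escape' U (pA r) (k.val+1) (by rw [pA_zero]; exact hs) hk'
  have hir : i < r := by omega
  rw [pA_succ hir] at hout
  rcases Nat.eq_zero_or_pos i with h0 | h0
  · subst h0
    rw [pA_zero] at hin
    exact ⟨.s, ⟨0, hir⟩, by simp [isArc], hin, hout, Or.inl rfl⟩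
  · have hi1 : i - 1 < r := by omega
    have heq : pA r i = .u ⟨i-1, hi1⟩ := by
      have h' : i = (i-1) + 1 := by omega
      conv_lhs => rw [h']
      exact pA_succ hi1
    rw [heq] at hin
    refine ⟨.u ⟨i-1, hi1⟩, ⟨i, hir⟩, ?_, hin, hout, Or.inr ⟨⟨i-1, hi1⟩, rfl, by simp; omega⟩⟩
    simp [isArc]; omega

lemma chainB_cross (U : Finset (GapV r)) (hs : GapV.s ∈ U) (k : Fin r) (hk : GapV.v k ∉ U) :
    ∃ (a : GapV r) (j : Fin r), isArc a (.v j) = true ∧ a ∈ U ∧ (GapV.v j : GapV r) ∉ U ∧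
      (a = .s ∨ ∃ m : Fin r, a = .v m ∧ m.val + 1 = j.val) := by
  have hk' : pB r (k.val + 1) ∉ U := by rw [pB_succ k.isLt]; simpa using hk
  obtain ⟨i, hi, hin, hout⟩ := escape' U (pB r) (k.val+1) (by rw [pB_zero]; exact hs) hk'
  have hir : i < r := by omega
  rw [pB_succ hir] at hout
  rcases Nat.eq_zero_or_pos i with h0 | h0
  · subst h0
    rw [pB_zero] at hin
    exact ⟨.s, ⟨0, hir⟩, by simp [isArc], hin, hout, Or.inl rfl⟩
  · have hi1 : i - 1 < r := by omega
    have heq : pB r i = .v ⟨i-1, hi1⟩ := by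
      have h' : i = (i-1) + 1 := by omega
      conv_lhs => rw [h']
      exact pB_succ hi1
    rw [heq] at hin
    refine ⟨.v ⟨i-1, hi1⟩, ⟨i, hir⟩, ?_, hin, hout, Or.inr ⟨⟨i-1, hi1⟩, rfl, by simp; omega⟩⟩
    simp [isArc]; omega

/-- crossing arc produced by the cycle, when all `v`'s lie in `U` and some `u` doesn't. -/
lemma cycleC_cross (hr : 1 ≤ r) (U : Finset (GapV r)) (hv : ∀ z : Fin r, GapV.v z ∈ U)
    (k : Fin r) (hk : GapV.u k ∉ U) :
    ∃ (a : GapV r) (j : Fin r), isArc a (.u j) = true ∧ a ∈ U ∧ (GapV.u j : GapV r) ∉ U ∧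
      ((∃ z : Fin r, a = .v z) ∨ ∃ m : Fin r, a = .u m ∧ m.val = j.val + 1) := by
  have hkr := k.isLt
  set m := 2*r - 1 - k.val with hm
  have hmr : r ≤ m ∧ m < 2*r := by omega
  have hfm : pC r m ∉ U := by
    rw [pC_u hmr.1 hmr.2]
    have : r - 1 - (m - r) = k.val := by omega
    simpa [this] using hk
  have h0 : pC r 0 ∈ U := by rw [pC_v (by omega)]; exact hv _
  obtain ⟨i, hi, hin, hout⟩ := escape' U (pC r) m h0 hfm
  have hi2 : i + 1 < 2*r := by omega
  have hi1r : r ≤ i + 1 := by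
    by_contra hc
    push_neg at hc
    rw [pC_v (by omega)] at hout
    exact hout (hv _)
  rw [pC_u hi1r (by omega)] at hout
  rcases Nat.lt_or_ge i r with hilt | hige
  · -- i = r - 1, tail is v 0
    have hieq : i = r - 1 := by omega
    have hveq : pC r i = .v ⟨0, by omega⟩ := by
      rw [pC_v hilt]
      congr 1
      apply Fin.ext
      simp; omega
    rw [hveq] at hin
    refine ⟨.v ⟨0, by omega⟩, ⟨r-1-(i+1-r), by omega⟩, ?_, hin, hout, Or.inl ⟨_, rfl⟩⟩
    simp [isArc]; omega
  · have hueq : pC r i = .u ⟨r-1-(i-r), by omega⟩ := pC_u hige (by omega)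
    rw [hueq] at hin
    refine ⟨.u ⟨r-1-(i-r), by omega⟩, ⟨r-1-(i+1-r), by omega⟩, ?_, hin, hout,
      Or.inr ⟨_, rfl, by simp; omega⟩⟩
    simp [isArc]; omega

lemma cycleD_cross (hr : 1 ≤ r) (U : Finset (GapV r)) (hu : ∀ z : Fin r, GapV.u z ∈ U)
    (k : Fin r) (hk : GapV.v k ∉ U) :
    ∃ (a : GapV r) (j : Fin r), isArc a (.v j) = true ∧ a ∈ U ∧ (GapV.v j : GapV r) ∉ U ∧
      ((∃ z : Fin r, a = .u z) ∨ ∃ m : Fin r, a = .v m ∧ m.val = j.val + 1) := by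
  have hkr := k.isLt
  set m := 2*r - 1 - k.val with hm
  have hmr : r ≤ m ∧ m < 2*r := by omega
  have hfm : pD r m ∉ U := by
    rw [pD_v hmr.1 hmr.2]
    have : r - 1 - (m - r) = k.val := by omega
    simpa [this] using hk
  have h0 : pD r 0 ∈ U := by rw [pD_u (by omega)]; exact hu _
  obtain ⟨i, hi, hin, hout⟩ := escape' U (pD r) m h0 hfm
  have hi2 : i + 1 < 2*r := by omega
  have hi1r : r ≤ i + 1 := by
    by_contra hc
    push_neg at hc
    rw [pD_u (by omega)] at hout
    exact hout (hu _)
  rw [pD_v hi1r (by omega)] at hout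
  rcases Nat.lt_or_ge i r with hilt | hige
  · have hieq : i = r - 1 := by omega
    have hveq : pD r i = .u ⟨0, by omega⟩ := by
      rw [pD_u hilt]
      congr 1
      apply Fin.ext
      simp; omega
    rw [hveq] at hin
    refine ⟨.u ⟨0, by omega⟩, ⟨r-1-(i+1-r), by omega⟩, ?_, hin, hout, Or.inl ⟨_, rfl⟩⟩
    simp [isArc]; omega
  · have hueq : pD r i = .v ⟨r-1-(i-r), by omega⟩ := pD_v hige (by omega)
    rw [hueq] at hin
    refine ⟨.v ⟨r-1-(i-r), by omega⟩, ⟨r-1-(i+1-r), by omega⟩, ?_, hin, hout,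
      Or.inr ⟨_, rfl, by simp; omega⟩⟩
    simp [isArc]; omega

end cut
section flow
variable {W : Type*} [Fintype W] [DecidableEq W]

lemma cutOut_sub_cutIn (x : W → W → ℝ) (U : Finset W) :
    cutOut x U - cutIn x U = ∑ v ∈ U, ((∑ w, x v w) - ∑ w, x w v) := by
  unfold cutOut cutIn flowBtw
  have h1 : ∑ v ∈ U, ∑ w, x v w = (∑ v ∈ U, ∑ w ∈ U, x v w) + ∑ v ∈ U, ∑ w ∈ Uᶜ, x v w := by
    rw [← Finset.sum_add_distrib]
    exact Finset.sum_congr rfl (fun v _ => (Finset.sum_add_sum_compl U _).symm)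
  have h2 : ∑ v ∈ U, ∑ w, x w v = (∑ v ∈ U, ∑ w ∈ U, x w v) + ∑ v ∈ U, ∑ w ∈ Uᶜ, x w v := by
    rw [← Finset.sum_add_distrib]
    exact Finset.sum_congr rfl (fun v _ => (Finset.sum_add_sum_compl U _).symm)
  have h3 : ∑ v ∈ U, ∑ w ∈ U, x v w = ∑ v ∈ U, ∑ w ∈ U, x w v := Finset.sum_comm
  have h4 : ∑ u ∈ Uᶜ, ∑ v ∈ U, x u v = ∑ v ∈ U, ∑ w ∈ Uᶜ, x w v := Finset.sum_comm
  rw [Finset.sum_sub_distrib, h1, h2, h4, h3]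
  ring

lemma cutIn_nonneg (x : W → W → ℝ) (hx : ∀ a b, 0 ≤ x a b) (U : Finset W) :
    0 ≤ cutIn x U :=
  Finset.sum_nonneg fun _ _ => Finset.sum_nonneg fun _ _ => hx _ _

lemma two_le_cutOut (x : W → W → ℝ) (hx : ∀ a b, 0 ≤ x a b) (U : Finset W)
    (a1 b1 a2 b2 : W) (ha1 : a1 ∈ U) (hb1 : b1 ∉ U) (ha2 : a2 ∈ U) (hb2 : b2 ∉ U)
    (hne : (a1, b1) ≠ (a2, b2)) : x a1 b1 + x a2 b2 ≤ cutOut x U := by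
  have hrw : cutOut x U = ∑ p ∈ U ×ˢ Uᶜ, x p.1 p.2 := by
    rw [Finset.sum_product]; rfl
  rw [hrw]
  have hsub : ({(a1,b1),(a2,b2)} : Finset (W × W)) ⊆ U ×ˢ Uᶜ := by
    intro p hp
    rw [Finset.mem_insert, Finset.mem_singleton] at hp
    rcases hp with h | h <;> subst h <;>
      simp [Finset.mem_product, Finset.mem_compl, ha1, hb1, ha2, hb2]
  calc x a1 b1 + x a2 b2 = ∑ p ∈ ({(a1,b1),(a2,b2)} : Finset (W × W)), x p.1 p.2 := by
        rw [Finset.sum_pair hne]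
    _ ≤ _ := Finset.sum_le_sum_of_subset_of_nonneg hsub (fun p _ _ => hx p.1 p.2)

end flow

lemma gap_cut {r : ℕ} (hr : 1 ≤ r) (U : Finset (GapV r)) (hsU : GapV.s ∈ U)
    (hUne : U ≠ Finset.univ) : 1 ≤ cutOut (gapX r) U := by
  classical
  by_cases htU : GapV.t ∈ U
  · -- t ∈ U : find two distinct crossing arcs
    have hex : ∃ w : GapV r, w ∉ U := by
      by_contra h
      push_neg at h
      exact hUne (Finset.eq_univ_iff_forall.mpr h)
    by_cases hu : ∃ k : Fin r, GapV.u k ∉ U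
    · by_cases hv : ∃ k : Fin r, GapV.v k ∉ U
      · -- both chains leave U
        obtain ⟨k, hk⟩ := hu
        obtain ⟨k', hk'⟩ := hv
        obtain ⟨a1, j1, harc1, ha1, hb1, _⟩ := chainA_cross U hsU k hk
        obtain ⟨a2, j2, harc2, ha2, hb2, _⟩ := chainB_cross U hsU k' hk'
        have hne : ((a1, GapV.u j1) : GapV r × GapV r) ≠ (a2, GapV.v j2) := by
          intro h
          exact absurd (congrArg Prod.snd h) (by simp)
        have := two_le_cutOut (gapX r) gapX_nonneg U a1 (.u j1) a2 (.v j2) ha1 hb1 ha2 hb2 hne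
        rw [gapX_arc harc1, gapX_arc harc2] at this
        linarith
      · -- only the u-chain leaves U; all v's in U
        push_neg at hv
        obtain ⟨k, hk⟩ := hu
        obtain ⟨a1, j1, harc1, ha1, hb1, hd1⟩ := chainA_cross U hsU k hk
        obtain ⟨a2, j2, harc2, ha2, hb2, hd2⟩ := cycleC_cross hr U hv k hk
        have hne : ((a1, GapV.u j1) : GapV r × GapV r) ≠ (a2, GapV.u j2) := by
          intro h
          have h1 := congrArg Prod.fst h
          have h2 := congrArg Prod.snd h
          simp only at h1 h2
          have hj : j1 = j2 := by simpa using h2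
          subst hj
          rcases hd1 with rfl | ⟨m, rfl, hm⟩
          · rcases hd2 with ⟨z, hz⟩ | ⟨m', hm', _⟩ <;> simp_all
          · rcases hd2 with ⟨z, hz⟩ | ⟨m', hm', hm'v⟩
            · rw [hz] at h1; exact absurd h1 (by simp)
            · rw [hm'] at h1
              have : m = m' := by simpa using h1
              subst this
              omega
        have := two_le_cutOut (gapX r) gapX_nonneg U a1 (.u j1) a2 (.u j2) ha1 hb1 ha2 hb2 hne
        rw [gapX_arc harc1, gapX_arc harc2] at this
        linarith
    · -- all u's in U
      push_neg at hu
      have hv : ∃ k : Fin r, GapV.v k ∉ U := by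
        obtain ⟨w, hw⟩ := hex
        cases w with
        | s => exact absurd hsU hw
        | t => exact absurd htU hw
        | u i => exact absurd (hu i) hw
        | v i => exact ⟨i, hw⟩
      obtain ⟨k, hk⟩ := hv
      obtain ⟨a1, j1, harc1, ha1, hb1, hd1⟩ := chainB_cross U hsU k hk
      obtain ⟨a2, j2, harc2, ha2, hb2, hd2⟩ := cycleD_cross hr U hu k hk
      have hne : ((a1, GapV.v j1) : GapV r × GapV r) ≠ (a2, GapV.v j2) := by
        intro h
        have h1 := congrArg Prod.fst h
        have h2 := congrArg Prod.snd h
        simp only at h1 h2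
        have hj : j1 = j2 := by simpa using h2
        subst hj
        rcases hd1 with rfl | ⟨m, rfl, hm⟩
        · rcases hd2 with ⟨z, hz⟩ | ⟨m', hm', _⟩ <;> simp_all
        · rcases hd2 with ⟨z, hz⟩ | ⟨m', hm', hm'v⟩
          · rw [hz] at h1; exact absurd h1 (by simp)
          · rw [hm'] at h1
            have : m = m' := by simpa using h1
            subst this
            omega
      have := two_le_cutOut (gapX r) gapX_nonneg U a1 (.v j1) a2 (.v j2) ha1 hb1 ha2 hb2 hne
      rw [gapX_arc harc1, gapX_arc harc2] at this
      linarith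
  · -- t ∉ U : use flow conservation
    have hdiff := cutOut_sub_cutIn (gapX r) U
    have hsum : ∑ v ∈ U, ((∑ w, gapX r v w) - ∑ w, gapX r w v) = 1 := by
      rw [Finset.sum_eq_single GapV.s]
      · rw [outS_eq hr, inS_eq]; norm_num
      · intro b hb hbs
        have hbt : b ≠ GapV.t := fun h => htU (h ▸ hb)
        rw [outDeg_eq hr b hbs hbt, inDeg_eq hr b hbs hbt]
        ring
      · intro h
        exact absurd hsU h
    have hnn := cutIn_nonneg (gapX r) gapX_nonneg U
    rw [hsum] at hdiff
    linarith

lemma gap_cost {r : ℕ} (hr : 1 ≤ r) :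
    ∑ a : GapV r, ∑ b : GapV r, gapCost a b * gapX r a b = (r : ℝ) + 1 := by
  rw [sum_gapV (fun a => ∑ b, gapCost a b * gapX r a b)]
  have hS : ∑ b, gapCost GapV.s b * gapX r GapV.s b = 1 := by
    rw [sum_gapV]
    have h1 : ∀ j : Fin r, gapCost GapV.s (GapV.u j) * gapX r GapV.s (GapV.u j)
        = if j.val = 0 then (1/2:ℝ) else 0 := by
      intro j; simp [gapCost, gapX, isArc]
    have h2 : ∀ j : Fin r, gapCost GapV.s (GapV.v j) * gapX r GapV.s (GapV.v j)
        = if j.val = 0 then (1/2:ℝ) else 0 := by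
      intro j; simp [gapCost, gapX, isArc]
    rw [Finset.sum_congr rfl (fun j _ => h1 j), Finset.sum_congr rfl (fun j _ => h2 j),
      sum_fin_ite, if_pos (show 0 < r by omega)]
    simp [gapCost, gapX, isArc]
    norm_num
  have hT : ∑ b, gapCost GapV.t b * gapX r GapV.t b = 0 := by
    rw [sum_gapV]
    simp [gapCost, gapX, isArc]
  have hU : ∀ i : Fin r, ∑ b, gapCost (GapV.u i) b * gapX r (GapV.u i) b
      = (if i.val = r - 1 then (1/2:ℝ) else 0) + (if 1 ≤ i.val then (1/2:ℝ) else 0) := by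
    intro i
    rw [sum_gapV]
    have h1 : ∀ j : Fin r, gapCost (GapV.u i) (GapV.u j) * gapX r (GapV.u i) (GapV.u j)
        = if j.val + 1 = i.val then (1/2:ℝ) else 0 := by
      intro j
      by_cases h : j.val + 1 = i.val
      · simp [gapCost, gapX, isArc, h]
      · simp [gapCost, gapX, isArc, h]
    have h2 : ∀ j : Fin r, gapCost (GapV.u i) (GapV.v j) * gapX r (GapV.u i) (GapV.v j) = 0 := by
      intro j; simp [gapCost]
    rw [Finset.sum_congr rfl (fun j _ => h1 j), Finset.sum_congr rfl (fun j _ => h2 j),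
      sum_fin_pred, Finset.sum_const_zero]
    have hs : gapCost (GapV.u i) GapV.s * gapX r (GapV.u i) GapV.s = 0 := by
      simp [gapCost]
    have ht : gapCost (GapV.u i) GapV.t * gapX r (GapV.u i) GapV.t
        = if i.val = r - 1 then (1/2:ℝ) else 0 := by
      simp [gapCost, gapX, isArc]
    rw [hs, ht]
    ring
  have hV : ∀ i : Fin r, ∑ b, gapCost (GapV.v i) b * gapX r (GapV.v i) b
      = (if i.val = r - 1 then (1/2:ℝ) else 0) + (if 1 ≤ i.val then (1/2:ℝ) else 0) := by
    intro i
    rw [sum_gapV]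
    have h1 : ∀ j : Fin r, gapCost (GapV.v i) (GapV.v j) * gapX r (GapV.v i) (GapV.v j)
        = if j.val + 1 = i.val then (1/2:ℝ) else 0 := by
      intro j
      by_cases h : j.val + 1 = i.val
      · simp [gapCost, gapX, isArc, h]
      · simp [gapCost, gapX, isArc, h]
    have h2 : ∀ j : Fin r, gapCost (GapV.v i) (GapV.u j) * gapX r (GapV.v i) (GapV.u j) = 0 := by
      intro j; simp [gapCost]
    rw [Finset.sum_congr rfl (fun j _ => h1 j), Finset.sum_congr rfl (fun j _ => h2 j),
      sum_fin_pred, Finset.sum_const_zero]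
    have hs : gapCost (GapV.v i) GapV.s * gapX r (GapV.v i) GapV.s = 0 := by
      simp [gapCost]
    have ht : gapCost (GapV.v i) GapV.t * gapX r (GapV.v i) GapV.t
        = if i.val = r - 1 then (1/2:ℝ) else 0 := by
      simp [gapCost, gapX, isArc]
    rw [hs, ht]
    ring
  rw [hS, hT, Finset.sum_congr rfl (fun i _ => hU i), Finset.sum_congr rfl (fun i _ => hV i),
    Finset.sum_add_distrib, sum_fin_ite, if_pos (show r - 1 < r by omega), sum_fin_ge1 hr]
  ring

theorem stmt10 (r : ℕ) (hr : 1 ≤ r) :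
    FeasLP (GapV.s : GapV r) GapV.t (gapX r) ∧
    ∑ a : GapV r, ∑ b : GapV r, gapCost a b * gapX r a b = (r : ℝ) + 1 := by
  refine ⟨⟨gapX_nonneg, ?_, outS_eq hr, inS_eq, inT_eq hr, outT_eq,
    fun v hvs hvt => outDeg_eq hr v hvs hvt, fun v hvs hvt => inDeg_eq hr v hvs hvt,
    fun U hsU hUne => gap_cut hr U hsU hUne⟩, gap_cost hr⟩
  intro v
  cases v <;> simp [gapX, isArc]
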